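/- arXiv:1903.01479 — 2 statements merged into one kernel-verified Lean document; each statement's English description precedes it below -/
import Mathlib

section
/- For a nonzero vector v ∈ ℂ^d, let the coherence rank r_C(v) be the number of nonzero coordinates of v, and for a d×d density matrix ρ let r_C(ρ) be the minimum, over all finite decompositions ρ = ∑_i p_i·ψ_iψ_iᴴ with p_i > 0 and ψ_i ∈ ℂ^d unit vectors, of max_i r_C(ψ_i). If ρ and σ are d×d density matrices, p > 0, and (K_n) is a finite family of incoherent d×d Kraus operators with ∑_n K_nᴴK_n ⪯ I and ∑_n K_n ρ K_nᴴ = p·σ, then r_C(σ) ≤ r_C(ρ). (The coherence rank can only decrease under stochastic incoherent operations.) -/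
open Matrix BigOperators
open scoped Kronecker Classical ComplexOrder

/-- The qubit state with Bloch vector `(rx, ry, rz)`:
`ρ = (1/2)(I + rx σx + ry σy + rz σz)`. -/
noncomputable def blochState (rx ry rz : ℝ) : Matrix (Fin 2) (Fin 2) ℂ :=
  !![(1 + rz : ℂ)/2, ((rx : ℂ) - ry * Complex.I)/2;
     ((rx : ℂ) + ry * Complex.I)/2, (1 - rz : ℂ)/2]

/-- `K` is an incoherent Kraus operator: every column has at most one nonzero entry. -/
def IsIncoherentKraus {d : ℕ} (K : Matrix (Fin d) (Fin d) ℂ) : Prop :=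
  ∀ j i i', K i j ≠ 0 → K i' j ≠ 0 → i = i'

/-- `K` is a strictly incoherent Kraus operator: every row and every column
has at most one nonzero entry. -/
def IsSIKraus {d : ℕ} (K : Matrix (Fin d) (Fin d) ℂ) : Prop :=
  (∀ i j j', K i j ≠ 0 → K i j' ≠ 0 → j = j') ∧
  (∀ j i i', K i j ≠ 0 → K i' j ≠ 0 → i = i')

/-- Partial trace over the first (A) factor. -/
noncomputable def ptraceA {dA dB : ℕ} (X : Matrix (Fin dA × Fin dB) (Fin dA × Fin dB) ℂ) :
    Matrix (Fin dB) (Fin dB) ℂ :=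
  fun j j' => ∑ i, X (i, j) (i, j')

/-- Partial trace over the second (B) factor. -/
noncomputable def ptraceB {dA dB : ℕ} (X : Matrix (Fin dA × Fin dB) (Fin dA × Fin dB) ℂ) :
    Matrix (Fin dA) (Fin dA) ℂ :=
  fun i i' => ∑ j, X (i, j) (i', j)

/-- The completely dephasing map: keep the diagonal of `X`. -/
noncomputable def dephase {d : ℕ} (X : Matrix (Fin d) (Fin d) ℂ) : Matrix (Fin d) (Fin d) ℂ :=
  Matrix.diagonal X.diag

/-- Coherence rank of a vector: the number of nonzero coordinates. -/
noncomputable def cohRankVec {d : ℕ} (v : Fin d → ℂ) : ℕ :=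
  (Finset.univ.filter fun i => v i ≠ 0).card

/-- Coherence rank of a density matrix: the minimum over finite pure-state
decompositions of the maximal coherence rank occurring in the decomposition. -/
noncomputable def cohRank {d : ℕ} (ρ : Matrix (Fin d) (Fin d) ℂ) : ℕ :=
  sInf {k : ℕ | ∃ (N : ℕ) (p : Fin N → ℝ) (ψ : Fin N → Fin d → ℂ),
    (∀ i, 0 < p i) ∧ (∀ i, ∑ j, Complex.normSq (ψ i j) = 1) ∧
    ρ = ∑ i, (p i : ℂ) • Matrix.vecMulVec (ψ i) (star (ψ i)) ∧
    k = Finset.univ.sup fun i => cohRankVec (ψ i)}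

lemma cohRankVec_smul_le {d : ℕ} (c : ℂ) (u : Fin d → ℂ) :
    cohRankVec (fun j => c * u j) ≤ cohRankVec u := by
  apply Finset.card_le_card
  intro j hj
  simp only [Finset.mem_filter, Finset.mem_univ, true_and] at hj ⊢
  exact fun h => hj (by simp [h])

lemma cohRankVec_mulVec_le {d : ℕ} {K : Matrix (Fin d) (Fin d) ℂ}
    (hK : IsIncoherentKraus K) (ψ : Fin d → ℂ) :
    cohRankVec (K.mulVec ψ) ≤ cohRankVec ψ := by
  classical
  have hex : ∀ i, (K.mulVec ψ) i ≠ 0 → ∃ j, K i j * ψ j ≠ 0 := by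
    intro i hi
    simp only [Matrix.mulVec, dotProduct] at hi
    obtain ⟨j, _, hj⟩ := Finset.exists_ne_zero_of_sum_ne_zero hi
    exact ⟨j, hj⟩
  set g : Fin d → Fin d := fun i =>
    if h : ∃ j, K i j * ψ j ≠ 0 then h.choose else i with hg
  have hspec : ∀ i, (K.mulVec ψ) i ≠ 0 → K i (g i) ≠ 0 ∧ ψ (g i) ≠ 0 := by
    intro i hi
    have h : ∃ j, K i j * ψ j ≠ 0 := hex i hi
    have hs := h.choose_spec
    simp only [hg, dif_pos h]
    exact ⟨fun h0 => hs (mul_eq_zero_of_left h0 _),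
           fun h0 => hs (mul_eq_zero_of_right _ h0)⟩
  apply Finset.card_le_card_of_injOn g
  · intro i hi
    simp only [Finset.coe_filter, Set.mem_setOf_eq, Finset.mem_filter, Finset.mem_univ, true_and] at hi ⊢
    exact (hspec i hi).2
  · intro i hi i' hi' hii
    simp only [Finset.coe_filter, Set.mem_setOf_eq, Finset.mem_univ, true_and] at hi hi'
    exact hK (g i) i i' (hspec i hi).1 (hii ▸ (hspec i' hi').1)

lemma kraus_conj {d : ℕ} (K : Matrix (Fin d) (Fin d) ℂ) (a : Fin d → ℂ) :
    K * vecMulVec a (star a) * Kᴴ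
      = vecMulVec (K.mulVec a) (star (K.mulVec a)) := by
  ext i i'
  simp only [Matrix.mul_apply, vecMulVec_apply, Pi.star_apply, conjTranspose_apply,
    Matrix.mulVec, dotProduct, star_sum, star_mul']
  rw [Finset.sum_mul_sum, Finset.sum_comm]
  refine Finset.sum_congr rfl fun l _ => ?_
  rw [Finset.sum_mul]
  exact Finset.sum_congr rfl fun j _ => by ring

lemma mem_decompSet {d : ℕ} {α : Type} [Fintype α] (σ : Matrix (Fin d) (Fin d) ℂ)
    (c : α → ℝ) (u : α → Fin d → ℂ) (k : ℕ)
    (hc : ∀ x, 0 ≤ c x)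
    (hσ : σ = ∑ x, (c x : ℂ) • vecMulVec (u x) (star (u x)))
    (hk : ∀ x, cohRankVec (u x) ≤ k) :
    ∃ k' ∈ {k : ℕ | ∃ (N : ℕ) (p : Fin N → ℝ) (ψ : Fin N → Fin d → ℂ),
      (∀ i, 0 < p i) ∧ (∀ i, ∑ j, Complex.normSq (ψ i j) = 1) ∧
      σ = ∑ i, (p i : ℂ) • Matrix.vecMulVec (ψ i) (star (ψ i)) ∧
      k = Finset.univ.sup fun i => cohRankVec (ψ i)}, k' ≤ k := by
  classical
  set n : α → ℝ := fun x => ∑ j, Complex.normSq (u x j) with hn_def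
  have hn : ∀ x, 0 ≤ n x := fun x => Finset.sum_nonneg fun j _ => Complex.normSq_nonneg _
  set sq : α → ℝ := fun x => Real.sqrt (n x) with hsq_def
  set w : α → ℝ := fun x => c x * n x with hw_def
  set v : α → Fin d → ℂ := fun x j => ((sq x : ℂ))⁻¹ * u x j with hv_def
  have key : ∀ x, (c x : ℂ) • vecMulVec (u x) (star (u x))
      = (w x : ℂ) • vecMulVec (v x) (star (v x)) := by
    intro x
    by_cases h0 : n x = 0
    · have hu : u x = 0 := by
        funext j
        have h1 : ∀ j ∈ Finset.univ, Complex.normSq (u x j) = 0 :=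
          (Finset.sum_eq_zero_iff_of_nonneg fun j _ => Complex.normSq_nonneg _).mp h0
        exact Complex.normSq_eq_zero.mp (h1 j (Finset.mem_univ j))
      have hv0 : v x = 0 := by funext j; simp [hv_def, hu]
      ext i j
      simp [hu, hv0, hw_def, h0, vecMulVec_apply]
    · have hnpos : 0 < n x := lt_of_le_of_ne (hn x) (Ne.symm h0)
      have hsqpos : 0 < sq x := Real.sqrt_pos.mpr hnpos
      have hsqne : ((sq x : ℝ) : ℂ) ≠ 0 := by
        simp [Complex.ofReal_ne_zero, ne_of_gt hsqpos]
      have hmul : sq x * sq x = n x := Real.mul_self_sqrt (hn x)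
      ext i j
      simp only [Matrix.smul_apply, vecMulVec_apply, Pi.star_apply, hv_def, hw_def,
        star_mul', smul_eq_mul, Complex.star_def, map_inv₀, Complex.conj_ofReal]
      have : ((c x * n x : ℝ) : ℂ) = (c x : ℂ) * ((sq x : ℂ) * (sq x : ℂ)) := by
        rw [← hmul]; push_cast; ring
      rw [this]
      field_simp
  have hσ' : σ = ∑ x, (w x : ℂ) • vecMulVec (v x) (star (v x)) := by
    rw [hσ]; exact Finset.sum_congr rfl fun x _ => key x
  set s : Finset α := Finset.univ.filter fun x => w x ≠ 0 with hs_def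
  have hσ'' : σ = ∑ x ∈ s, (w x : ℂ) • vecMulVec (v x) (star (v x)) := by
    rw [hσ']
    refine (Finset.sum_subset (Finset.filter_subset _ _) ?_).symm
    intro x _ hx
    have : w x = 0 := by
      by_contra h
      exact hx (Finset.mem_filter.mpr ⟨Finset.mem_univ x, h⟩)
    simp [this]
  set e : s ≃ Fin s.card := s.equivFin with he_def
  refine ⟨Finset.univ.sup fun i : Fin s.card => cohRankVec (v (e.symm i)),
    ⟨s.card, fun i => w (e.symm i), fun i => v (e.symm i), ?_, ?_, ?_, rfl⟩, ?_⟩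
  · intro i
    have hmem := (e.symm i).2
    simp only [hs_def, Finset.mem_filter] at hmem
    have hwnn : 0 ≤ w (e.symm i) := mul_nonneg (hc _) (hn _)
    exact lt_of_le_of_ne hwnn (Ne.symm hmem.2)
  · intro i
    set x := ((e.symm i : s) : α) with hx_def
    have hmem := (e.symm i).2
    simp only [hs_def, Finset.mem_filter] at hmem
    have hnne : n x ≠ 0 := fun h => hmem.2 (by simp [hw_def, ← hx_def, h])
    have hnpos : 0 < n x := lt_of_le_of_ne (hn x) (Ne.symm hnne)
    have hsqpos : 0 < sq x := Real.sqrt_pos.mpr hnpos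
    have hmul : sq x * sq x = n x := Real.mul_self_sqrt (hn x)
    have hvn : ∀ j, Complex.normSq (v x j) = (n x)⁻¹ * Complex.normSq (u x j) := by
      intro j
      simp only [hv_def, Complex.normSq_mul, map_inv₀, Complex.normSq_ofReal]
      rw [← hmul]
    show ∑ j, Complex.normSq (v x j) = 1
    simp only [hvn, ← Finset.mul_sum]
    have hsum : ∑ j, Complex.normSq (u x j) = n x := rfl
    rw [hsum, inv_mul_cancel₀ hnne]
  · rw [hσ'']
    rw [← Finset.sum_coe_sort s (fun x => ((w x : ℝ) : ℂ) • vecMulVec (v x) (star (v x)))]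
    exact (Equiv.sum_comp e.symm fun x : s =>
      ((w x : ℝ) : ℂ) • vecMulVec (v (x : α)) (star (v (x : α)))).symm
  · refine Finset.sup_le fun i _ => ?_
    exact le_trans (cohRankVec_smul_le _ _) (hk _)

/-- The coherence rank can only decrease under stochastic incoherent operations. -/
theorem cohRank_monotone_under_stochastic_IO (d : ℕ)
    (ρ σ : Matrix (Fin d) (Fin d) ℂ)
    (hρ : ρ.PosSemidef) (hρtr : ρ.trace = 1)
    (hσ : σ.PosSemidef) (hσtr : σ.trace = 1)
    (p : ℝ) (hp : 0 < p)
    (N : ℕ) (K : Fin N → Matrix (Fin d) (Fin d) ℂ)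
    (hK : ∀ n, IsIncoherentKraus (K n))
    (hsum : ((1 : Matrix (Fin d) (Fin d) ℂ) - ∑ n, (K n)ᴴ * K n).PosSemidef)
    (hconv : ∑ n, K n * ρ * (K n)ᴴ = (p : ℂ) • σ) :
    cohRank σ ≤ cohRank ρ := by
  classical
  -- Step 1: the decomposition set of ρ is nonempty, via the square root.
  obtain ⟨B, hBH, hBB⟩ : ∃ B : Matrix (Fin d) (Fin d) ℂ, B.IsHermitian ∧ B * B = ρ := by
    open scoped MatrixOrder in
    exact ⟨CFC.sqrt ρ, (CFC.sqrt_nonneg ρ).posSemidef.1, CFC.sqrt_mul_sqrt_self ρ hρ.nonneg⟩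
  have hden : ρ = ∑ j : Fin d, ((1 : ℝ) : ℂ) • vecMulVec (fun i => B i j)
      (star fun i => B i j) := by
    ext i i'
    rw [← hBB]
    simp only [Matrix.sum_apply, Matrix.smul_apply, vecMulVec_apply, Pi.star_apply,
      Complex.ofReal_one, one_smul, Matrix.mul_apply, smul_eq_mul, one_mul]
    refine Finset.sum_congr rfl fun j _ => ?_
    rw [hBH.apply j i']
  obtain ⟨k₁, hk₁, -⟩ := mem_decompSet ρ (fun _ : Fin d => (1 : ℝ))
    (fun j i => B i j) d (fun _ => zero_le_one) hden
    (fun j => le_trans (Finset.card_le_card (Finset.filter_subset _ _)) (by simp))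
  have hne : {k : ℕ | ∃ (N : ℕ) (p : Fin N → ℝ) (ψ : Fin N → Fin d → ℂ),
      (∀ i, 0 < p i) ∧ (∀ i, ∑ j, Complex.normSq (ψ i j) = 1) ∧
      ρ = ∑ i, (p i : ℂ) • Matrix.vecMulVec (ψ i) (star (ψ i)) ∧
      k = Finset.univ.sup fun i => cohRankVec (ψ i)}.Nonempty := ⟨k₁, hk₁⟩
  -- Step 2: an optimal decomposition of ρ.
  have hmemρ : cohRank ρ ∈ {k : ℕ | ∃ (N : ℕ) (p : Fin N → ℝ) (ψ : Fin N → Fin d → ℂ),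
      (∀ i, 0 < p i) ∧ (∀ i, ∑ j, Complex.normSq (ψ i j) = 1) ∧
      ρ = ∑ i, (p i : ℂ) • Matrix.vecMulVec (ψ i) (star (ψ i)) ∧
      k = Finset.univ.sup fun i => cohRankVec (ψ i)} := Nat.sInf_mem hne
  obtain ⟨N₀, p₀, ψ₀, hp₀, hunit₀, hdec, hsup⟩ := hmemρ
  -- Step 3: transformed decomposition of σ.
  have hpc : (p : ℂ) ≠ 0 := by
    exact_mod_cast hp.ne'
  have h1 : (p : ℂ) • σ = ∑ n, ∑ i, (p₀ i : ℂ) •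
      vecMulVec ((K n).mulVec (ψ₀ i)) (star ((K n).mulVec (ψ₀ i))) := by
    rw [← hconv]
    refine Finset.sum_congr rfl fun n _ => ?_
    rw [hdec, Finset.mul_sum, Finset.sum_mul]
    refine Finset.sum_congr rfl fun i _ => ?_
    rw [mul_smul_comm, smul_mul_assoc, kraus_conj]
  have hσdec : σ = ∑ x : Fin N × Fin N₀, ((p⁻¹ * p₀ x.2 : ℝ) : ℂ) •
      vecMulVec ((K x.1).mulVec (ψ₀ x.2)) (star ((K x.1).mulVec (ψ₀ x.2))) := by
    have h2 : σ = (p : ℂ)⁻¹ • ((p : ℂ) • σ) := by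
      rw [smul_smul, inv_mul_cancel₀ hpc, one_smul]
    rw [Fintype.sum_prod_type]
    rw [h2, h1, Finset.smul_sum]
    refine Finset.sum_congr rfl fun n _ => ?_
    rw [Finset.smul_sum]
    refine Finset.sum_congr rfl fun i _ => ?_
    rw [smul_smul]
    congr 1
    push_cast
    ring
  have hbound : ∀ x : Fin N × Fin N₀, cohRankVec ((K x.1).mulVec (ψ₀ x.2)) ≤ cohRank ρ := by
    intro x
    refine le_trans (cohRankVec_mulVec_le (hK x.1) (ψ₀ x.2)) ?_
    rw [hsup]
    exact Finset.le_sup (f := fun i => cohRankVec (ψ₀ i)) (Finset.mem_univ x.2)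
  obtain ⟨k', hk', hle⟩ := mem_decompSet σ (fun x : Fin N × Fin N₀ => p⁻¹ * p₀ x.2)
    (fun x => (K x.1).mulVec (ψ₀ x.2)) (cohRank ρ)
    (fun x => mul_nonneg (inv_nonneg.mpr hp.le) (hp₀ x.2).le) hσdec hbound
  exact le_trans (Nat.sInf_le hk') hle
end

section
/- Let h : [0,1] → ℝ, h(x) = −x·log₂(x) − (1−x)·log₂(1−x) (binary entropy, with h(0) = h(1) = 0). Then for all real numbers r_x, r_y, r_z with r_x² + r_y² + r_z² ≤ 1: 1 − h((1 + √(r_x²+r_y²))/2) ≤ h((1 + r_z)/2) − h((1 + √(r_x²+r_y²+r_z²))/2). (Using the closed formulas S(ρ) = h((1+‖r⃗‖)/2), distillable coherence C_d(ρ) = h((1+r_z)/2) − h((1+‖r⃗‖)/2), and the fact that the coherence cost of a qubit state depends only on √(r_x²+r_y²), this inequality expresses the Proposition that among all single-qubit states, the family q·|+⟩⟨+| + (1−q)·|−⟩⟨−| — whose member with Bloch vector (√(r_x²+r_y²),0,0) has the same coherence cost as the state with Bloch vector (r_x,r_y,r_z) — has minimal distillable coherence for fixed coherence cost.) -/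
open Matrix BigOperators
open scoped Kronecker Classical ComplexOrder

/-- Binary entropy `h(x) = -x log₂ x - (1-x) log₂ (1-x)` (with `h(0) = h(1) = 0`). -/
noncomputable def binEntropy (x : ℝ) : ℝ :=
  -(x * Real.logb 2 x) - (1 - x) * Real.logb 2 (1 - x)


noncomputable def binG (r : ℝ) : ℝ :=
  (1 + r) * Real.log (1 + r) + (1 - r) * Real.log (1 - r)

lemma binG_series {r : ℝ} (hr : 0 ≤ r) (hr1 : r < 1) :
    HasSum (fun m : ℕ => (r ^ 2) ^ (m + 1) / ((m + 1) * (2 * m + 1))) (binG r) := by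
  have habs : |r| < 1 := by rw [abs_of_nonneg hr]; exact hr1
  have habs' : |(-r)| < 1 := by rwa [abs_neg]
  have habs2 : |r ^ 2| < 1 := by
    rw [abs_of_nonneg (sq_nonneg r)]
    nlinarith
  have h1 := Real.hasSum_pow_div_log_of_abs_lt_one habs
  have h2 := Real.hasSum_pow_div_log_of_abs_lt_one habs'
  set t : ℕ → ℝ := fun n =>
    -(1 + r) * ((-r) ^ (n + 1) / (n + 1)) - (1 - r) * (r ^ (n + 1) / (n + 1)) with ht_def
  have ht : HasSum t (binG r) := by
    have h := (h2.mul_left (-(1 + r))).sub (h1.mul_left (1 - r))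
    have e1 : (1 : ℝ) - -r = 1 + r := by ring
    rw [e1] at h
    convert h using 1
    · rfl
    unfold binG; ring
  have teven : ∀ m : ℕ, t (2 * m) = 2 * r ^ (2 * m + 2) / (2 * (m : ℝ) + 1) := by
    intro m
    simp only [ht_def]
    rw [Odd.neg_pow ⟨m, rfl⟩]
    push_cast
    have hm : (2 * (m : ℝ) + 1) ≠ 0 := by positivity
    field_simp
    ring
  have todd : ∀ m : ℕ, t (2 * m + 1) = -((r ^ 2) ^ (m + 1) / ((m : ℝ) + 1)) := by
    intro m
    simp only [ht_def]
    rw [Even.neg_pow ⟨m + 1, by ring⟩]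
    push_cast
    have hm : ((m : ℝ) + 1) ≠ 0 := by positivity
    have hp : (r ^ 2) ^ (m + 1) = r ^ (2 * m + 2) := by rw [← pow_mul]; ring_nf
    rw [hp]
    field_simp
    ring
  have hodd : HasSum (fun m : ℕ => t (2 * m + 1)) (Real.log (1 - r ^ 2)) := by
    have h3 := (Real.hasSum_pow_div_log_of_abs_lt_one habs2).neg
    rw [neg_neg] at h3
    simpa only [todd] using h3
  have hevenS : Summable (fun m : ℕ => t (2 * m)) := by
    simp only [teven]
    refine Summable.of_nonneg_of_le (fun m => by positivity) (fun m => ?_)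
      ((summable_geometric_of_lt_one (sq_nonneg r) (by nlinarith)).mul_left 2)
    ·
      have hm : (1 : ℝ) ≤ 2 * (m : ℝ) + 1 := by have := Nat.cast_nonneg (α := ℝ) m; linarith
      have h1' : 2 * r ^ (2 * m + 2) / (2 * (m : ℝ) + 1) ≤ 2 * r ^ (2 * m + 2) / 1 :=
        div_le_div_of_nonneg_left (by positivity) one_pos hm
      refine h1'.trans ?_
      rw [div_one]
      have hle : r ^ (2 * m + 2) ≤ r ^ (2 * m) := pow_le_pow_of_le_one hr hr1.le (by omega)
      have : (r ^ 2) ^ m = r ^ (2 * m) := by rw [← pow_mul]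
      rw [this]
      linarith
  have heven : HasSum (fun m : ℕ => t (2 * m)) (∑' m, t (2 * m)) := hevenS.hasSum
  have hval : (∑' m, t (2 * m)) + Real.log (1 - r ^ 2) = binG r :=
    (heven.even_add_odd hodd).unique ht
  have hpair : HasSum (fun m : ℕ => t (2 * m) + t (2 * m + 1)) (binG r) := by
    rw [← hval]; exact heven.add hodd
  convert hpair using 2 with m
  rw [teven, todd]
  have hm1 : (2 * (m : ℝ) + 1) ≠ 0 := by positivity
  have hm2 : ((m : ℝ) + 1) ≠ 0 := by positivity
  have hp : (r ^ 2) ^ (m + 1) = r ^ (2 * m + 2) := by rw [← pow_mul]; ring_nf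
  rw [hp]
  push_cast
  field_simp
  ring

lemma binG_superadd_open {u v : ℝ} (hu : 0 ≤ u) (hv : 0 ≤ v) (huv : u + v < 1) :
    binG (Real.sqrt u) + binG (Real.sqrt v) ≤ binG (Real.sqrt (u + v)) := by
  have hsu : Real.sqrt u ^ 2 = u := Real.sq_sqrt hu
  have hsv : Real.sqrt v ^ 2 = v := Real.sq_sqrt hv
  have hsuv : Real.sqrt (u + v) ^ 2 = u + v := Real.sq_sqrt (by linarith)
  have h1 : Real.sqrt u < 1 := by
    rw [show (1:ℝ) = Real.sqrt 1 by simp]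
    exact Real.sqrt_lt_sqrt hu (by linarith)
  have h2 : Real.sqrt v < 1 := by
    rw [show (1:ℝ) = Real.sqrt 1 by simp]
    exact Real.sqrt_lt_sqrt hv (by linarith)
  have h3 : Real.sqrt (u + v) < 1 := by
    rw [show (1:ℝ) = Real.sqrt 1 by simp]
    exact Real.sqrt_lt_sqrt (by linarith) (by linarith)
  have Su := binG_series (Real.sqrt_nonneg u) h1
  have Sv := binG_series (Real.sqrt_nonneg v) h2
  have Suv := binG_series (Real.sqrt_nonneg (u + v)) h3
  rw [hsu] at Su; rw [hsv] at Sv; rw [hsuv] at Suv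
  refine hasSum_le (fun m => ?_) (Su.add Sv) Suv
  have hD : (0:ℝ) < ((m:ℝ) + 1) * (2 * m + 1) := by positivity
  rw [← add_div]
  gcongr
  have e1 : u ^ (m + 1) ≤ u * (u + v) ^ m := by
    rw [pow_succ']
    exact mul_le_mul_of_nonneg_left (pow_le_pow_left₀ hu (le_add_of_nonneg_right hv) m) hu
  have e2 : v ^ (m + 1) ≤ v * (u + v) ^ m := by
    rw [pow_succ']
    exact mul_le_mul_of_nonneg_left (pow_le_pow_left₀ hv (le_add_of_nonneg_left hu) m) hv
  have e3 : (u + v) ^ (m + 1) = (u + v) * (u + v) ^ m := pow_succ' _ _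
  linarith


lemma binG_continuous : Continuous binG := by
  unfold binG
  have h := Real.continuous_mul_log
  have h1 : Continuous fun r : ℝ => (1 + r) * Real.log (1 + r) :=
    h.comp (continuous_const.add continuous_id)
  have h2 : Continuous fun r : ℝ => (1 - r) * Real.log (1 - r) :=
    h.comp (continuous_const.sub continuous_id)
  exact h1.add h2

lemma binG_superadd {u v : ℝ} (hu : 0 ≤ u) (hv : 0 ≤ v) (huv : u + v ≤ 1) :
    binG (Real.sqrt u) + binG (Real.sqrt v) ≤ binG (Real.sqrt (u + v)) := by
  rcases lt_or_eq_of_le huv with hlt | heq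
  · exact binG_superadd_open hu hv hlt
  rcases eq_or_lt_of_le hv with hv0 | hv0
  · simp only [← hv0, Real.sqrt_zero, add_zero]
    simp [binG]
  -- limit argument: t → 1⁻
  have hGc : Continuous fun x : ℝ => binG (Real.sqrt x) :=
    binG_continuous.comp Real.continuous_sqrt
  have l : Filter ℝ := nhdsWithin 1 (Set.Iio 1)
  have hne : (nhdsWithin (1:ℝ) (Set.Iio 1)).NeBot := nhdsLT_neBot 1
  have ht1 : Filter.Tendsto (fun t : ℝ => binG (Real.sqrt u) + binG (Real.sqrt (t * v)))
      (nhdsWithin (1:ℝ) (Set.Iio 1)) (nhds (binG (Real.sqrt u) + binG (Real.sqrt v))) := by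
    have : Filter.Tendsto (fun t : ℝ => binG (Real.sqrt u) + binG (Real.sqrt (t * v)))
        (nhds 1) (nhds (binG (Real.sqrt u) + binG (Real.sqrt (1 * v)))) :=
      (continuous_const.add (hGc.comp (continuous_id.mul continuous_const))).tendsto 1
    rw [one_mul] at this
    exact this.mono_left nhdsWithin_le_nhds
  have ht2 : Filter.Tendsto (fun t : ℝ => binG (Real.sqrt (u + t * v)))
      (nhdsWithin (1:ℝ) (Set.Iio 1)) (nhds (binG (Real.sqrt (u + v)))) := by
    have : Filter.Tendsto (fun t : ℝ => binG (Real.sqrt (u + t * v)))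
        (nhds 1) (nhds (binG (Real.sqrt (u + 1 * v)))) :=
      (hGc.comp (continuous_const.add (continuous_id.mul continuous_const))).tendsto 1
    rw [one_mul] at this
    exact this.mono_left nhdsWithin_le_nhds
  refine le_of_tendsto_of_tendsto ht1 ht2 ?_
  have hIoo : Set.Ioo (0:ℝ) 1 ∈ nhdsWithin (1:ℝ) (Set.Iio 1) := by
    rw [mem_nhdsWithin_iff_exists_mem_nhds_inter]
    exact ⟨Set.Ioi 0, Ioi_mem_nhds one_pos, fun x hx => ⟨hx.1, hx.2⟩⟩
  filter_upwards [hIoo] with t ht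
  have htv : 0 ≤ t * v := mul_nonneg ht.1.le hv
  have : u + t * v < 1 := by
    have : t * v < v := by nlinarith [ht.2, hv0]
    linarith
  exact binG_superadd_open hu htv this


lemma binEntropy_eq_binG {r : ℝ} (h1 : -1 ≤ r) (h2 : r ≤ 1) :
    binEntropy ((1 + r) / 2) = 1 - binG r / (2 * Real.log 2) := by
  have key : ∀ a : ℝ, (a / 2) * Real.log (a / 2) = (a * Real.log a - a * Real.log 2) / 2 := by
    intro a
    rcases eq_or_ne a 0 with ha | ha
    · simp [ha]
    · rw [Real.log_div ha two_ne_zero]; ring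
  have hL : Real.log 2 ≠ 0 := by
    have := Real.log_pos one_lt_two; linarith
  have k1 := key (1 + r)
  have k2 := key (1 - r)
  unfold binEntropy binG
  rw [Real.logb, Real.logb]
  have e : (1 : ℝ) - (1 + r) / 2 = (1 - r) / 2 := by ring
  rw [e]
  have e2 : -((1 + r) / 2 * (Real.log ((1 + r) / 2) / Real.log 2)) -
      (1 - r) / 2 * (Real.log ((1 - r) / 2) / Real.log 2) =
      -(((1 + r) / 2) * Real.log ((1 + r) / 2) + ((1 - r) / 2) * Real.log ((1 - r) / 2)) /
        Real.log 2 := by ring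
  rw [e2, k1, k2]
  field_simp
  ring

lemma binEntropy_symm (x : ℝ) : binEntropy (1 - x) = binEntropy x := by
  unfold binEntropy
  rw [sub_sub_cancel]
  ring

/-- Among all single-qubit states, the maximally-coherent-plane family has minimal
distillable coherence for fixed coherence cost:
`1 - h((1+r)/2) ≤ h((1+rz)/2) - h((1+‖r⃗‖)/2)` with `r = √(rx²+ry²)`. -/
theorem qubit_min_distillable_coherence_for_fixed_cost (rx ry rz : ℝ)
    (h : rx ^ 2 + ry ^ 2 + rz ^ 2 ≤ 1) :
    1 - binEntropy ((1 + Real.sqrt (rx ^ 2 + ry ^ 2)) / 2) ≤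
      binEntropy ((1 + rz) / 2) -
        binEntropy ((1 + Real.sqrt (rx ^ 2 + ry ^ 2 + rz ^ 2)) / 2) := by
  set u := rx ^ 2 + ry ^ 2 with hu_def
  set v := rz ^ 2 with hv_def
  have hu : 0 ≤ u := by positivity
  have hv : 0 ≤ v := by positivity
  have huv : u + v ≤ 1 := by rw [hu_def, hv_def]; linarith
  have hsu1 : Real.sqrt u ≤ 1 := Real.sqrt_le_one.mpr (by linarith)
  have hsuv1 : Real.sqrt (u + v) ≤ 1 := Real.sqrt_le_one.mpr (by linarith)
  have hz1 : |rz| ≤ 1 := by nlinarith [abs_nonneg rz, sq_abs rz]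
  have hzv : Real.sqrt v = |rz| := by rw [hv_def, Real.sqrt_sq_eq_abs]
  have hmid : binEntropy ((1 + rz) / 2) = 1 - binG |rz| / (2 * Real.log 2) := by
    rcases le_or_gt 0 rz with hz | hz
    · rw [abs_of_nonneg hz]
      exact binEntropy_eq_binG (by linarith) (by rw [abs_of_nonneg hz] at hz1; linarith)
    · rw [abs_of_neg hz]
      have e : (1 + rz) / 2 = 1 - (1 + -rz) / 2 := by ring
      rw [e, binEntropy_symm]
      exact binEntropy_eq_binG (by linarith) (by rw [abs_of_neg hz] at hz1; linarith)
  have hA : binEntropy ((1 + Real.sqrt u) / 2) = 1 - binG (Real.sqrt u) / (2 * Real.log 2) :=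
    binEntropy_eq_binG (by linarith [Real.sqrt_nonneg u]) hsu1
  have hC : binEntropy ((1 + Real.sqrt (u + v)) / 2) =
      1 - binG (Real.sqrt (u + v)) / (2 * Real.log 2) :=
    binEntropy_eq_binG (by linarith [Real.sqrt_nonneg (u + v)]) hsuv1
  have hgoal : rx ^ 2 + ry ^ 2 + rz ^ 2 = u + v := by rw [hu_def, hv_def]
  rw [hgoal, hA, hC, hmid, ← hzv]
  have key := binG_superadd hu hv huv
  have hL : (0:ℝ) < 2 * Real.log 2 := by positivity
  have h1 : binG (Real.sqrt u) / (2 * Real.log 2) + binG (Real.sqrt v) / (2 * Real.log 2) ≤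
      binG (Real.sqrt (u + v)) / (2 * Real.log 2) := by
    rw [← add_div]
    gcongr
  linarith
end
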